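/- Saddle Point conditional gradient identifies the most violated constraint of A_k (Proposition, Section 5.2): Fix (x, x_out, z) ∈ ℝ^n × ℝ^m × ℝ^m with 0 ≤ z[i] ≤ 1 for all i, set x̂ = Wx + b, and suppose the pre-activation bounds l̂, û ∈ ℝ^m satisfy M⁻[i] ≤ l̂[i] and û[i] ≤ M⁺[i] for all i, where M⁻[i] = Σ_j W[i,j]Ľ[i,j] + b[i] and M⁺[i] = Σ_j W[i,j]Ǔ[i,j] + b[i]. Define the Big-M violations v_i⁰ = x_out[i] − û[i]z[i] and v_i¹ = x_out[i] − x̂[i] + l̂[i](1 − z[i]), and let I* be the mask with I*[i,j] = 1 iff ((1 − z[i])Ľ[i,j] + z[i]Ǔ[i,j] − x[j])·W[i,j] ≥ 0. Then for every neuron i: (a) v_i(I) ≤ v_i(I*) for every mask I ∈ {0,1}^{m×n}; (b) if 0_i and 1_i denote the all-zero and all-one rows, then v_i(0) ≤ v_i⁰ and v_i(1) ≤ v_i¹; consequently max(v_i(I*), v_i⁰, v_i¹) equals the maximum violation over all upper-bounding constraints of the set A_k at neuron i, namely the supremum of v_i(I) over masks I whose i-th row is neither all-zero nor all-one, together with v_i⁰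 and v_i¹. -/

import Mathlib

open Finset

/-- `Ľ[i,j]`: lower corner of the box assigned according to the sign of `W[i,j]`. -/
noncomputable def cLmat {m n : ℕ} (W : Fin m → Fin n → ℝ) (l u : Fin n → ℝ)
    (i : Fin m) (j : Fin n) : ℝ :=
  if 0 ≤ W i j then l j else u j

/-- `Ǔ[i,j]`: upper corner of the box assigned according to the sign of `W[i,j]`. -/
noncomputable def cUmat {m n : ℕ} (W : Fin m → Fin n → ℝ) (l u : Fin n → ℝ)
    (i : Fin m) (j : Fin n) : ℝ :=
  if 0 ≤ W i j then u j else l j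

/-- Right-hand side of the Anderson constraint for neuron `i` with mask `I`. -/
noncomputable def andersonRHS {m n : ℕ} (W : Fin m → Fin n → ℝ) (b : Fin m → ℝ)
    (l u : Fin n → ℝ) (I : Fin m → Fin n → ℝ)
    (x : Fin n → ℝ) (z : Fin m → ℝ) (i : Fin m) : ℝ :=
  (∑ j, W i j * I i j * x j) + z i * b i
    - (∑ j, W i j * I i j * cLmat W l u i j) * (1 - z i)
    + (∑ j, W i j * (1 - I i j) * cUmat W l u i j) * z i

/-- Violation of the Anderson constraint for neuron `i` with mask `I`. -/
noncomputable def violation {m n : ℕ} (W : Fin m → Fin n → ℝ) (b : Fin m → ℝ)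
    (l u : Fin n → ℝ) (I : Fin m → Fin n → ℝ)
    (x : Fin n → ℝ) (xout z : Fin m → ℝ) (i : Fin m) : ℝ :=
  xout i - andersonRHS W b l u I x z i

lemma violation_eq {m n : ℕ} (W : Fin m → Fin n → ℝ) (b : Fin m → ℝ) (l u : Fin n → ℝ)
    (I : Fin m → Fin n → ℝ) (x : Fin n → ℝ) (xout z : Fin m → ℝ) (i : Fin m) :
    violation W b l u I x xout z i
      = xout i - z i * b i - z i * (∑ j, W i j * cUmat W l u i j)
        + ∑ j, I i j * (((1 - z i) * cLmat W l u i j + z i * cUmat W l u i j - x j) * W i j) := by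
  have key : (∑ j, W i j * I i j * x j)
      - (∑ j, W i j * I i j * cLmat W l u i j) * (1 - z i)
      + (∑ j, W i j * (1 - I i j) * cUmat W l u i j) * z i
      = z i * (∑ j, W i j * cUmat W l u i j)
        - ∑ j, I i j * (((1 - z i) * cLmat W l u i j + z i * cUmat W l u i j - x j) * W i j) := by
    rw [Finset.sum_mul, Finset.sum_mul, Finset.mul_sum, ← Finset.sum_sub_distrib,
      ← Finset.sum_add_distrib, ← Finset.sum_sub_distrib]
    exact Finset.sum_congr rfl fun j _ => by ring
  unfold violation andersonRHS
  linear_combination -key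

lemma collapse_max (a b c : ℝ) (h : a ≤ b ∨ a ≤ c) : max (max a b) c = max b c := by
  apply le_antisymm
  · apply max_le _ (le_max_right _ _)
    apply max_le _ (le_max_left _ _)
    rcases h with h | h
    · exact h.trans (le_max_left _ _)
    · exact h.trans (le_max_right _ _)
  · exact max_le ((le_max_right a b).trans (le_max_left _ _)) (le_max_right _ _)

/-- Saddle Point conditional gradient identifies the most violated constraint
of `A_k` (Proposition, Section 5.2): with `z ∈ [0,1]`, `x̂ = Wx + b`, and
pre-activation bounds at least as tight as interval propagation
(`M⁻ ≤ l̂`, `û ≤ M⁺`), for every neuron `i`: (a) the sign-test mask `I*`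
maximizes the Anderson violation over all binary masks; (b) the violations of
the all-zero and all-one masks are dominated by the Big-M violations
`v⁰, v¹`; consequently `max(v_i(I*), v_i⁰, v_i¹)` is the greatest violation
over all upper-bounding constraints of `A_k` at neuron `i`, i.e. the
violations `v_i(I)` over masks whose `i`-th row is neither all-zero nor
all-one, together with `v_i⁰` and `v_i¹`. -/
theorem saddlePoint_conditional_gradient_most_violated
    {m n : ℕ} (W : Fin m → Fin n → ℝ) (b : Fin m → ℝ) (l u : Fin n → ℝ)
    (hlu : ∀ j, l j ≤ u j)
    (lhat uhat : Fin m → ℝ)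
    (x : Fin n → ℝ) (xout z : Fin m → ℝ)
    (hz : ∀ i, 0 ≤ z i ∧ z i ≤ 1)
    (hMminus : ∀ i, (∑ j, W i j * cLmat W l u i j) + b i ≤ lhat i)
    (hMplus : ∀ i, uhat i ≤ (∑ j, W i j * cUmat W l u i j) + b i)
    (Istar : Fin m → Fin n → ℝ)
    (hIstar : ∀ i j, Istar i j =
      if 0 ≤ ((1 - z i) * cLmat W l u i j + z i * cUmat W l u i j - x j) * W i j
      then 1 else 0) :
    ∀ i : Fin m,
      (∀ I : Fin m → Fin n → ℝ, (∀ i' j, I i' j = 0 ∨ I i' j = 1) →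
        violation W b l u I x xout z i ≤ violation W b l u Istar x xout z i) ∧
      (violation W b l u (fun _ _ => 0) x xout z i ≤ xout i - uhat i * z i) ∧
      (violation W b l u (fun _ _ => 1) x xout z i ≤
        xout i - ((∑ j, W i j * x j) + b i) + lhat i * (1 - z i)) ∧
      IsGreatest
        ({v : ℝ | ∃ I : Fin m → Fin n → ℝ, (∀ i' j, I i' j = 0 ∨ I i' j = 1) ∧
            (¬ ∀ j, I i j = 0) ∧ (¬ ∀ j, I i j = 1) ∧
            v = violation W b l u I x xout z i} ∪
          {xout i - uhat i * z i,
            xout i - ((∑ j, W i j * x j) + b i) + lhat i * (1 - z i)})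
        (max (max (violation W b l u Istar x xout z i)
            (xout i - uhat i * z i))
          (xout i - ((∑ j, W i j * x j) + b i) + lhat i * (1 - z i))) := by
  intro i
  obtain ⟨hz0, hz1⟩ := hz i
  -- (a)
  have hA : ∀ I : Fin m → Fin n → ℝ, (∀ i' j, I i' j = 0 ∨ I i' j = 1) →
      violation W b l u I x xout z i ≤ violation W b l u Istar x xout z i := by
    intro I hI
    rw [violation_eq, violation_eq]
    refine add_le_add (le_refl _) (Finset.sum_le_sum fun j _ => ?_)
    rw [hIstar i j]
    by_cases hcj : 0 ≤ ((1 - z i) * cLmat W l u i j + z i * cUmat W l u i j - x j) * W i j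
    · rw [if_pos hcj, one_mul]
      rcases hI i j with h | h <;> rw [h]
      · simpa using hcj
      · rw [one_mul]
    · rw [if_neg hcj, zero_mul]
      rcases hI i j with h | h <;> rw [h]
      · simp
      · rw [one_mul]; exact le_of_lt (not_le.mp hcj)
  -- (b0)
  have h0 : violation W b l u (fun _ _ => 0) x xout z i ≤ xout i - uhat i * z i := by
    rw [violation_eq]
    simp only [zero_mul, Finset.sum_const_zero, add_zero]
    nlinarith [mul_le_mul_of_nonneg_left (hMplus i) hz0]
  -- (b1)
  have h1 : violation W b l u (fun _ _ => 1) x xout z i ≤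
      xout i - ((∑ j, W i j * x j) + b i) + lhat i * (1 - z i) := by
    rw [violation_eq]
    have hsum : (∑ j, (1 : ℝ) * (((1 - z i) * cLmat W l u i j + z i * cUmat W l u i j - x j) * W i j))
        = (1 - z i) * (∑ j, W i j * cLmat W l u i j)
          + z i * (∑ j, W i j * cUmat W l u i j) - ∑ j, W i j * x j := by
      rw [Finset.mul_sum, Finset.mul_sum, ← Finset.sum_add_distrib,
        ← Finset.sum_sub_distrib]
      exact Finset.sum_congr rfl fun j _ => by ring
    rw [hsum]
    have h1z : (0 : ℝ) ≤ 1 - z i := by linarith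
    nlinarith [mul_le_mul_of_nonneg_left (hMminus i) h1z]
  refine ⟨hA, h0, h1, ?_, ?_⟩
  · -- membership
    set vS := violation W b l u Istar x xout z i with hvS
    set v0 := xout i - uhat i * z i with hv0
    set v1 := xout i - ((∑ j, W i j * x j) + b i) + lhat i * (1 - z i) with hv1
    have hIb : ∀ i' j, Istar i' j = 0 ∨ Istar i' j = 1 := by
      intro i' j
      rw [hIstar i' j]
      split
      · exact Or.inr rfl
      · exact Or.inl rfl
    have hmem01 : max v0 v1 ∈ ({v0, v1} : Set ℝ) := by
      rcases le_total v0 v1 with h | h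
      · rw [max_eq_right h]; right; rfl
      · rw [max_eq_left h]; left; rfl
    by_cases hall0 : ∀ j, Istar i j = 0
    · have heq : vS = violation W b l u (fun _ _ => 0) x xout z i := by
        rw [hvS, violation_eq, violation_eq]
        congr 1
        exact Finset.sum_congr rfl fun j _ => by rw [hall0 j]
      rw [collapse_max _ _ _ (Or.inl (heq ▸ h0))]
      exact Set.mem_union_right _ hmem01
    · by_cases hall1 : ∀ j, Istar i j = 1
      · have heq : vS = violation W b l u (fun _ _ => 1) x xout z i := by
          rw [hvS, violation_eq, violation_eq]
          congr 1
          exact Finset.sum_congr rfl fun j _ => by rw [hall1 j]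
        rw [collapse_max _ _ _ (Or.inr (heq ▸ h1))]
        exact Set.mem_union_right _ hmem01
      · have hvSmem : vS ∈ ({v : ℝ | ∃ I : Fin m → Fin n → ℝ,
            (∀ i' j, I i' j = 0 ∨ I i' j = 1) ∧ (¬ ∀ j, I i j = 0) ∧ (¬ ∀ j, I i j = 1) ∧
            v = violation W b l u I x xout z i} : Set ℝ) :=
          ⟨Istar, hIb, hall0, hall1, rfl⟩
        rcases le_total (max vS v0) v1 with h | h
        · rw [max_eq_right h]
          exact Set.mem_union_right _ (Or.inr rfl)
        · rw [max_eq_left h]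
          rcases le_total vS v0 with h2 | h2
          · rw [max_eq_right h2]
            exact Set.mem_union_right _ (Or.inl rfl)
          · rw [max_eq_left h2]
            exact Set.mem_union_left _ hvSmem
  · -- upper bound
    rintro v (⟨I, hI, -, -, rfl⟩ | hv)
    · exact (hA I hI).trans ((le_max_left _ _).trans (le_max_left _ _))
    · rcases hv with rfl | hv
      · exact (le_max_right _ _).trans (le_max_left _ _)
      · rw [Set.mem_singleton_iff] at hv
        rw [hv]
        exact le_max_right _ _
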